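/- Let A and B be independent real-valued random variables and c a fixed real constant. Suppose 1 ≤ A ≤ c almost surely, A < B almost surely, P(B > c) > 0, and c·E[B] ≥ E[A]·E[B | B > c]. Then E[min(AB, c) − min(A, c)] / E[min(AB, c) − min(B, c)] ≥ E[AB − A] / E[AB − B]. (In particular, since A ≤ c, min(A,c) = A.) -/

import Mathlib

open MeasureTheory ProbabilityTheory

private lemma min_eq_sub_max (x c : ℝ) : min x c = x - max (x - c) 0 := by
  rcases le_total x c with h | h
  · rw [min_eq_left h, max_eq_right (sub_nonpos.2 h), sub_zero]
  · rw [min_eq_right h, max_eq_left (sub_nonneg.2 h)]; ring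

/-- **A-B-c Lemma.** If `A`, `B` are independent integrable random variables with
`1 ≤ A ≤ c` a.s., `A < B` a.s., `P(B > c) > 0`, and `c·E[B] ≥ E[A]·E[B | B > c]`
(where `E[B | B > c] = E[B·1{B>c}] / P(B>c)`), then
`E[min(AB,c) − min(A,c)] / E[min(AB,c) − min(B,c)] ≥ E[AB − A] / E[AB − B]`. -/
theorem abc_lemma {Ω : Type*} [MeasurableSpace Ω] (μ : Measure Ω) [IsProbabilityMeasure μ]
    (A B : Ω → ℝ) (c : ℝ)
    (hAB : IndepFun A B μ)
    (hA : Integrable A μ) (hB : Integrable B μ) (hABint : Integrable (fun ω => A ω * B ω) μ)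
    (hA1 : ∀ᵐ ω ∂μ, 1 ≤ A ω) (hAc : ∀ᵐ ω ∂μ, A ω ≤ c)
    (hAltB : ∀ᵐ ω ∂μ, A ω < B ω)
    (hBc : 0 < (μ {ω | B ω > c}).toReal)
    (hcond : c * ∫ ω, B ω ∂μ ≥
      (∫ ω, A ω ∂μ) * ((∫ ω in {ω | B ω > c}, B ω ∂μ) / (μ {ω | B ω > c}).toReal))
    (hden1 : 0 < ∫ ω, (min (A ω * B ω) c - min (B ω) c) ∂μ)
    (hden2 : 0 < ∫ ω, (A ω * B ω - B ω) ∂μ) :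
    (∫ ω, (min (A ω * B ω) c - min (A ω) c) ∂μ) /
      (∫ ω, (min (A ω * B ω) c - min (B ω) c) ∂μ) ≥
    (∫ ω, (A ω * B ω - A ω) ∂μ) / (∫ ω, (A ω * B ω - B ω) ∂μ) := by
  classical
  -- measurable representative of B
  set B' : Ω → ℝ := hB.1.mk B with hB'def
  have hBB' : B =ᵐ[μ] B' := hB.1.ae_eq_mk
  have hB'm : Measurable B' := hB.1.stronglyMeasurable_mk.measurable
  have hB' : Integrable B' μ := hB.congr hBB'
  set s' : Set Ω := {ω | c < B' ω} with hs'def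
  have hs' : MeasurableSet s' := measurableSet_lt measurable_const hB'm
  have hsets : {ω | B ω > c} =ᵐ[μ] s' := by
    rw [Filter.eventuallyEq_set]
    filter_upwards [hBB'] with ω hω
    simp [hs'def, Set.mem_setOf_eq, hω]
  -- abbreviations
  set a : ℝ := ∫ ω, A ω ∂μ with ha_def
  set b : ℝ := ∫ ω, B ω ∂μ with hb_def
  set p : ℝ := (μ s').toReal with hp_def
  set q : ℝ := ∫ ω in s', B' ω ∂μ with hq_def
  set X : ℝ := ∫ ω, max (A ω * B ω - c) 0 ∂μ with hX_def
  set Y : ℝ := ∫ ω, max (B ω - c) 0 ∂μ with hY_def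
  have hmu : (μ {ω | B ω > c}) = μ s' := measure_congr hsets
  have hp0 : 0 < p := by rw [hp_def, ← hmu]; exact hBc
  have hqold : (∫ ω in {ω | B ω > c}, B ω ∂μ) = q := by
    rw [hq_def, setIntegral_congr_set hsets]
    exact integral_congr_ae (ae_restrict_of_ae hBB')
  -- integrability
  have hX_int : Integrable (fun ω => max (A ω * B ω - c) 0) μ :=
    (hABint.sub (integrable_const c)).pos_part
  have hY_int : Integrable (fun ω => max (B ω - c) 0) μ :=
    (hB.sub (integrable_const c)).pos_part
  -- the truncated indicator function g
  set g : Ω → ℝ := fun ω => if c < B' ω then B' ω else 0 with hg_def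
  have hg_eq : g = Set.indicator s' B' := by
    funext ω
    simp [hg_def, Set.indicator_apply, hs'def, Set.mem_setOf_eq]
  have hg_int : Integrable g μ := by rw [hg_eq]; exact hB'.indicator hs'
  have hg_integral : ∫ ω, g ω ∂μ = q := by
    rw [hq_def, ← integral_indicator hs', ← hg_eq]
  -- independence facts
  have hAB' : IndepFun A B' μ := IndepFun.congr hAB (ae_eq_refl A) hBB'
  have hpsi : Measurable (fun x : ℝ => if c < x then x else 0) :=
    Measurable.ite (measurableSet_lt measurable_const measurable_id)
      measurable_id measurable_const
  have hindep1 : IndepFun A g μ := hAB'.comp measurable_id hpsi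
  have hindep2 : IndepFun (fun ω => A ω - 1) g μ :=
    hAB'.comp (measurable_id.sub measurable_const) hpsi
  have hA1' : Integrable (fun ω => A ω - 1) μ := hA.sub (integrable_const 1)
  have hh_int : Integrable (fun ω => (A ω - 1) * g ω) μ :=
    hindep2.integrable_mul hA1' hg_int
  -- E[AB] = a b
  have hab : ∫ ω, A ω * B ω ∂μ = a * b := IndepFun.integral_mul_eq_mul_integral hAB hA.1 hB.1
  -- integral of A - 1
  have hA1int : ∫ ω, (A ω - 1) ∂μ = a - 1 := by
    rw [integral_sub hA (integrable_const 1), integral_const]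
    simp [ha_def]
  -- E[(A-1) g] = (a-1) q
  have hhq : ∫ ω, (A ω - 1) * g ω ∂μ = (a - 1) * q := by
    have := IndepFun.integral_mul_eq_mul_integral hindep2 hA1'.1 hg_int.1
    rw [show ((fun ω => A ω - 1) * g) = fun ω => (A ω - 1) * g ω from rfl] at this
    rw [this, hA1int, hg_integral]
  -- decomposition of numerators/denominators
  have hABA : Integrable (fun ω => A ω * B ω - A ω) μ := hABint.sub hA
  have hABB : Integrable (fun ω => A ω * B ω - B ω) μ := hABint.sub hB
  have hABBX : Integrable (fun ω => (A ω * B ω - B ω) - max (A ω * B ω - c) 0) μ :=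
    hABB.sub hX_int
  have hsum : Integrable (fun ω => (A ω - 1) * g ω + max (B ω - c) 0) μ :=
    hh_int.add hY_int
  have EN1 : ∫ ω, (min (A ω * B ω) c - min (A ω) c) ∂μ
      = (∫ ω, (A ω * B ω - A ω) ∂μ) - X := by
    rw [hX_def, ← integral_sub hABA hX_int]
    apply integral_congr_ae
    filter_upwards [hAc] with ω h
    rw [min_eq_sub_max, min_eq_left h]; ring
  have ED1 : ∫ ω, (min (A ω * B ω) c - min (B ω) c) ∂μ
      = (∫ ω, (A ω * B ω - B ω) ∂μ) - X + Y := by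
    rw [hX_def, hY_def, ← integral_sub hABB hX_int, ← integral_add hABBX hY_int]
    refine integral_congr_ae (Filter.Eventually.of_forall fun ω => ?_)
    simp only [min_eq_sub_max]; ring
  have EN2 : ∫ ω, (A ω * B ω - A ω) ∂μ = a * b - a := by
    rw [integral_sub hABint hA, hab]
  have ED2 : ∫ ω, (A ω * B ω - B ω) ∂μ = a * b - b := by
    rw [integral_sub hABint hB, hab]
  -- key lower bound on X
  have hXlb : (a - 1) * q + Y ≤ X := by
    have hpt : ∀ᵐ ω ∂μ, (A ω - 1) * g ω + max (B ω - c) 0 ≤ max (A ω * B ω - c) 0 := by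
      filter_upwards [hA1, hAc, hAltB, hBB'] with ω h1 h2 h3 h4
      have hc1 : (1 : ℝ) ≤ c := le_trans h1 h2
      by_cases hcase : c < B' ω
      · have hBc' : c < B ω := h4 ▸ hcase
        have hB0 : 0 < B ω := lt_trans (by linarith) hBc'
        have : g ω = B ω := by rw [hg_def]; simp [hcase, h4]
        rw [this, max_eq_left (by linarith : (0:ℝ) ≤ B ω - c)]
        have : (A ω - 1) * B ω + (B ω - c) = A ω * B ω - c := by ring
        rw [this]
        exact le_max_left _ _
      · have hBle : B ω ≤ c := h4 ▸ (not_lt.1 hcase)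
        have : g ω = 0 := by rw [hg_def]; simp [hcase]
        rw [this, max_eq_right (by linarith : B ω - c ≤ 0)]
        simp [le_max_right]
    have := integral_mono_ae hsum hX_int hpt
    rwa [integral_add hh_int hY_int, hhq] at this
  -- Y = q - c p
  have hYeq : Y = q - c * p := by
    have : Y = ∫ ω, Set.indicator s' (fun ω => B' ω - c) ω ∂μ := by
      refine integral_congr_ae ?_
      filter_upwards [hBB'] with ω h4
      by_cases hcase : ω ∈ s'
      · have hc : c < B' ω := hcase
        rw [Set.indicator_of_mem hcase, h4]
        exact max_eq_left (by linarith)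
      · have hc : ¬ c < B' ω := hcase
        rw [Set.indicator_of_notMem hcase, h4]
        exact max_eq_right (by linarith [not_lt.1 hc])
    rw [this, integral_indicator hs',
      integral_sub hB'.integrableOn (integrableOn_const (measure_lt_top μ s').ne),
      setIntegral_const, smul_eq_mul, measureReal_def, ← hp_def, ← hq_def]
    ring
  -- basic inequalities
  have ha1 : (1 : ℝ) ≤ a := by
    have h := integral_mono_ae (integrable_const (1:ℝ)) hA hA1
    simpa using h
  have hba : a ≤ b := integral_mono_ae hA hB (hAltB.mono fun _ h => h.le)
  have hY0 : 0 ≤ Y := integral_nonneg fun ω => le_max_right _ _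
  -- condition: a q ≤ c b p
  have hcond' : a * q ≤ c * b * p := by
    rw [hqold, hmu, ← hp_def] at hcond
    have h2 := mul_le_mul_of_nonneg_right hcond hp0.le
    rwa [mul_assoc, div_mul_cancel₀ _ hp0.ne'] at h2
  -- finish by arithmetic
  rw [ge_iff_le, div_le_div_iff₀ hden2 hden1, EN1, ED1, EN2, ED2]
  rw [hYeq] at hXlb hY0
  have P1 : 0 ≤ (a - 1) * (c * b * p - a * q) :=
    mul_nonneg (by linarith) (by linarith)
  have P2 : ((a - 1) * q + (q - c * p)) * (b - a) ≤ X * (b - a) :=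
    mul_le_mul_of_nonneg_right hXlb (by linarith)
  nlinarith [P1, P2]
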